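/- Let (a_n) be an arithmetic sequence whose ratio sequence (q_n) is unbounded, and let (e_n) be the strictly increasing enumeration of the set {r·a_{k−1} : k ≥ 1, r ∈ {1} ∪ [⌊q_k/3⌋ + 1, q_k − 1]}. Then (e_n) is an arithmetic-type sequence associated with (a_n), its ratio sequence (e_{n+1}/e_n) is unbounded, every element x ∈ t_{(e_n)}(𝕋) has finite supp(x), and t_{(e_n)}(𝕋) is countable. -/

import Mathlib

open Filter Topology

noncomputable section

/-- The circle group `𝕋 = ℝ/ℤ`. -/
abbrev Circle1 : Type := AddCircle (1 : ℝ)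

/-- An arithmetic sequence `(a_n)_{n ≥ 1}`, with the convention `a 0 = 1`:
a strictly increasing sequence of positive integers with `1 < a 1` and `a n ∣ a (n+1)`. -/
def IsArithSeq (a : ℕ → ℕ) : Prop :=
  a 0 = 1 ∧ StrictMono a ∧ ∀ n, a n ∣ a (n + 1)

/-- The ratio sequence: `q n = a n / a (n-1)` (so `q 1 = a 1`). -/
def ratioSeq (a : ℕ → ℕ) (n : ℕ) : ℕ := a n / a (n - 1)

/-- The subgroup of `𝕋` characterized by a sequence of integers `(u n)`. -/
def charSub (u : ℕ → ℕ) : Set Circle1 :=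
  {x : Circle1 | Tendsto (fun n => (u n) • x) atTop (nhds 0)}

/-- The set `{r·a_{k-1} : k ≥ 1, 1 ≤ r ≤ q_k - 1}` whose increasing enumeration is `(d_n)`. -/
def DSet (a : ℕ → ℕ) : Set ℕ :=
  {m | ∃ k, 1 ≤ k ∧ ∃ r, 1 ≤ r ∧ r ≤ ratioSeq a k - 1 ∧ m = r * a (k - 1)}

/-- `(d_n)` is the strictly increasing enumeration of `DSet a`. -/
def IsDSeq (a d : ℕ → ℕ) : Prop := StrictMono d ∧ Set.range d = DSet a

/-- An arithmetic-type sequence associated with the arithmetic sequence `(a_n)`: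
a strictly increasing sequence of positive integers whose set of values contains all the
values `a k` (for `k ≥ 1`) and is contained in `DSet a`. -/
def IsArithTypeSeq (a e : ℕ → ℕ) : Prop :=
  StrictMono e ∧ (∀ k, 1 ≤ k → a k ∈ Set.range e) ∧ Set.range e ⊆ DSet a

/-- `(c_n)_{n ≥ 1}` is the canonical representation of `x ∈ 𝕋` w.r.t. the arithmetic
sequence `(a_n)`: `0 ≤ c n ≤ q n - 1` for all `n ≥ 1`, `c n < q n - 1` infinitely often,
and `x = Σ_{n ≥ 1} c n / a n` in `𝕋`. -/
def IsCanonicalRep (a c : ℕ → ℕ) (x : Circle1) : Prop :=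
  (∀ n, 1 ≤ n → c n ≤ ratioSeq a n - 1) ∧
  {n | 1 ≤ n ∧ c n < ratioSeq a n - 1}.Infinite ∧
  x = ((∑' n : ℕ, (c (n + 1) : ℝ) / (a (n + 1) : ℝ) : ℝ) : Circle1)

/-- The support of a digit sequence: `supp(x) = {n ≥ 1 : c n ≠ 0}`. -/
def suppOf (c : ℕ → ℕ) : Set ℕ := {n | 1 ≤ n ∧ c n ≠ 0}

/-- The set `{r·a_{k-1} : k ≥ 1, r ∈ {1} ∪ [⌊q_k/3⌋ + 1, q_k - 1]}`. -/
def ESet (a : ℕ → ℕ) : Set ℕ :=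
  {m | ∃ k, 1 ≤ k ∧ ∃ r, (r = 1 ∨ (ratioSeq a k / 3 + 1 ≤ r ∧ r ≤ ratioSeq a k - 1)) ∧
    m = r * a (k - 1)}

namespace ESeqAux
variable {a c : ℕ → ℕ}

lemma a_pos (ha : IsArithSeq a) (n : ℕ) : 0 < a n := by
  have := ha.2.1.monotone (Nat.zero_le n)
  simp [ha.1] at this; omega
  

lemma a_mono (ha : IsArithSeq a) : Monotone a := ha.2.1.monotone

lemma dvd_pred (ha : IsArithSeq a) (k : ℕ) (hk : 1 ≤ k) : a (k - 1) ∣ a k := by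
  have := ha.2.2 (k - 1)
  rwa [Nat.sub_add_cancel hk] at this

lemma ratio_mul (ha : IsArithSeq a) (k : ℕ) (hk : 1 ≤ k) :
    a k = ratioSeq a k * a (k - 1) :=
  (Nat.div_mul_cancel (dvd_pred ha k hk)).symm

lemma two_le_ratio (ha : IsArithSeq a) (k : ℕ) (hk : 1 ≤ k) : 2 ≤ ratioSeq a k := by
  have hm := ratio_mul ha k hk
  have hlt : a (k - 1) < a k := ha.2.1 (by omega)
  have hp := a_pos ha (k - 1)
  rcases Nat.lt_or_ge (ratioSeq a k) 2 with h | h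
  · interval_cases (ratioSeq a k) <;> omega
  · exact h

lemma dvd_of_le (ha : IsArithSeq a) {n m : ℕ} (h : n ≤ m) : a n ∣ a m := by
  induction m with
  | zero => simpa [Nat.le_zero.mp h]
  | succ m ih =>
    rcases Nat.lt_or_ge n (m+1) with h' | h'
    · exact (ih (by omega)).trans (ha.2.2 m)
    · have : n = m + 1 := by omega
      simp [this]

lemma two_pow_le (ha : IsArithSeq a) (n : ℕ) : 2 ^ n ≤ a n := by
  induction n with
  | zero => simp [ha.1]
  | succ n ih =>
    have hm := ratio_mul ha (n+1) (by omega)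
    have hr := two_le_ratio ha (n+1) (by omega)
    simp only [Nat.add_sub_cancel] at hm
    calc 2 ^ (n+1) = 2 * 2 ^ n := by ring
    _ ≤ ratioSeq a (n+1) * a n := Nat.mul_le_mul hr ih
    _ = a (n+1) := hm.symm

lemma eset_subset_dset (ha : IsArithSeq a) : ESet a ⊆ DSet a := by
  rintro m ⟨k, hk, r, hr, rfl⟩
  have h2 := two_le_ratio ha k hk
  rcases hr with rfl | ⟨h1, h2'⟩
  · exact ⟨k, hk, 1, le_refl _, by omega, rfl⟩
  · exact ⟨k, hk, r, by omega, h2', rfl⟩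

lemma a_mem_eset (ha : IsArithSeq a) (k : ℕ) : a k ∈ ESet a :=
  ⟨k + 1, by omega, 1, Or.inl rfl, by simp⟩

/-- gap lemma: an element of ESet exceeding `a (k-1)` is at least `(q k/3+1) * a (k-1)`. -/
lemma eset_gap (ha : IsArithSeq a) {k : ℕ} (hk : 1 ≤ k) {m : ℕ} (hm : m ∈ ESet a)
    (hgt : a (k - 1) < m) : (ratioSeq a k / 3 + 1) * a (k - 1) ≤ m := by
  obtain ⟨j, hj, r, hr, rfl⟩ := hm
  have hqj := two_le_ratio ha j hj
  have hqk := two_le_ratio ha k hk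
  have hr1 : 1 ≤ r := by
    rcases hr with rfl | ⟨h1, _⟩
    · omega
    · omega
  rcases Nat.lt_trichotomy j k with hlt | rfl | hgt'
  · -- j < k : contradiction
    exfalso
    have hrle : r ≤ ratioSeq a j - 1 := by
      rcases hr with rfl | ⟨_, h⟩
      · omega
      · exact h
    have hle : r * a (j - 1) ≤ (ratioSeq a j - 1) * a (j - 1) :=
      Nat.mul_le_mul_right _ hrle
    have hmul := ratio_mul ha j hj
    have hpj := a_pos ha (j - 1)
    have : (ratioSeq a j - 1) * a (j - 1) < a j := by
      have : (ratioSeq a j - 1) * a (j - 1) + a (j-1) = ratioSeq a j * a (j-1) := by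
        have : ratioSeq a j - 1 + 1 = ratioSeq a j := by omega
        calc (ratioSeq a j - 1) * a (j - 1) + a (j-1) = (ratioSeq a j - 1 + 1) * a (j-1) := by ring
        _ = ratioSeq a j * a (j-1) := by rw [this]
      omega
    have hja : a j ≤ a (k - 1) := a_mono ha (by omega)
    omega
  · rcases hr with rfl | ⟨h1, _⟩
    · omega
    · exact Nat.mul_le_mul_right _ h1
  · have h1 : a k ≤ a (j - 1) := a_mono ha (by omega)
    have hmul := ratio_mul ha k hk
    have hdiv : ratioSeq a k / 3 + 1 ≤ ratioSeq a k := by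
      have := Nat.div_lt_self (by omega : 0 < ratioSeq a k) (by omega : 1 < 3)
      omega
    calc (ratioSeq a k / 3 + 1) * a (k - 1) ≤ ratioSeq a k * a (k-1) :=
          Nat.mul_le_mul_right _ hdiv
    _ = a k := hmul.symm
    _ ≤ a (j - 1) := h1
    _ ≤ r * a (j - 1) := by nlinarith [a_pos ha (j-1)]



lemma round_eq_of_abs {y : ℝ} {m : ℤ} (h : |y - m| < 1/2) : round y = m := by
  have h1 : (m : ℝ) - 1/2 < y := by cases abs_lt.mp h; linarith
  have h2 : y < m + 1/2 := by cases abs_lt.mp h; linarith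
  rw [round_eq, Int.floor_eq_iff]
  constructor <;> push_cast <;> linarith

lemma coe_eq_coe_of_sub_int {u v : ℝ} (z : ℤ) (h : u - v = z) :
    ((u : ℝ) : Circle1) = v := by
  have h1 : ((u - v : ℝ) : Circle1) = 0 := by
    rw [AddCircle.coe_eq_zero_iff]; exact ⟨z, by simp [h]⟩
  have h2 : ((u : ℝ) : Circle1) - v = 0 := by rw [← h1]; norm_cast
  exact sub_eq_zero.mp h2

lemma norm_coe (y : ℝ) : ‖((y : ℝ) : Circle1)‖ = |y - round y| := by
  rw [AddCircle.norm_eq]; simp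

lemma nsmul_coe (m : ℕ) (y : ℝ) : (m • ((y:ℝ) : Circle1)) = (((m * y : ℝ)) : Circle1) := by
  rw [← QuotientAddGroup.mk_nsmul]; norm_num [nsmul_eq_mul]

/-- dichotomy for s ∈ [0,1) close to an integer -/
lemma dichotomy {s : ℝ} (h0 : 0 ≤ s) (h1 : s < 1) (h : |s - round s| < 1/12) :
    s < 1/12 ∨ 11/12 < s := by
  rcases le_or_gt (round s) 0 with hm | hm
  · left
    have : (round s : ℝ) ≤ 0 := by exact_mod_cast hm
    have := abs_lt.mp h
    linarith [this.2]
  · right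
    have : (1 : ℝ) ≤ (round s : ℝ) := by exact_mod_cast hm
    have := abs_lt.mp h
    linarith [this.1]

/-- The walk lemma: if all multiples `r·β` for `r` in the middle-third range are within
`1/12` of integers, with `β` not too small and `< 1/12`, contradiction. -/
lemma walk_lemma {q : ℕ} (hq : 12 ≤ q) {β : ℝ} (hβl : (11/12 : ℝ)/q ≤ β) (hβu : β < 1/12)
    (h : ∀ r : ℕ, q/3 + 1 ≤ r → r ≤ q - 1 → ∃ m : ℤ, |(r:ℝ)*β - m| < 1/12) : False := by
  have hQ : (12 : ℝ) ≤ (q : ℝ) := by exact_mod_cast hq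
  have hQ0 : (0 : ℝ) < q := by linarith
  have hβ0 : 0 < β := lt_of_lt_of_le (by positivity) hβl
  set r0 : ℕ := q/3 + 1 with hr0
  set r1 : ℕ := q - 1 with hr1
  have hr01 : r0 ≤ r1 := by omega
  have h' : ∀ r : ℕ, r0 ≤ r → r ≤ r1 → |(r:ℝ)*β - round ((r:ℝ)*β)| < 1/12 := by
    intro r ha hb
    obtain ⟨m, hm⟩ := h r ha hb
    rwa [round_eq_of_abs (lt_trans hm (by norm_num))]
  -- consecutive rounds are equal
  have hstep : ∀ r : ℕ, r0 ≤ r → r + 1 ≤ r1 →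
      round (((r+1 : ℕ):ℝ)*β) = round ((r:ℝ)*β) := by
    intro r ha hb
    have h1 := h' r ha (by omega)
    have h2 := h' (r+1) (by omega) hb
    have hd : |(round (((r+1:ℕ):ℝ)*β) : ℝ) - round ((r:ℝ)*β)| < 1 := by
      have : ((r+1:ℕ):ℝ)*β - (r:ℝ)*β = β := by push_cast; ring
      calc |(round (((r+1:ℕ):ℝ)*β) : ℝ) - round ((r:ℝ)*β)|
          ≤ |(round (((r+1:ℕ):ℝ)*β) : ℝ) - ((r+1:ℕ):ℝ)*β| + |((r+1:ℕ):ℝ)*β - (r:ℝ)*β|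
            + |(r:ℝ)*β - round ((r:ℝ)*β)| := by
              have := abs_sub_le ((round (((r+1:ℕ):ℝ)*β) : ℝ)) (((r+1:ℕ):ℝ)*β) ((r:ℝ)*β)
              have := abs_sub_le ((round (((r+1:ℕ):ℝ)*β) : ℝ)) ((r:ℝ)*β) ((round ((r:ℝ)*β):ℝ))
              linarith [abs_sub_le ((round (((r+1:ℕ):ℝ)*β) : ℝ)) (((r+1:ℕ):ℝ)*β) ((round ((r:ℝ)*β)):ℝ), abs_sub_comm ((round (((r+1:ℕ):ℝ)*β)):ℝ) (((r+1:ℕ):ℝ)*β)]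
      _ < 1/12 + 1/12 + 1/12 := by
            rw [this]
            have hx1 : |(round (((r+1:ℕ):ℝ)*β) : ℝ) - ((r+1:ℕ):ℝ)*β| < 1/12 := by
              rw [abs_sub_comm]; exact h2
            have hx3 : |β| < 1/12 := by rw [abs_of_pos hβ0]; exact hβu
            linarith
      _ < 1 := by norm_num
    have h5 : |round (((r+1:ℕ):ℝ)*β) - round ((r:ℝ)*β)| < 1 := by exact_mod_cast hd
    have := Int.abs_lt_one_iff.mp h5
    omega
  have hconst : ∀ d : ℕ, r0 + d ≤ r1 → round (((r0 + d : ℕ):ℝ)*β) = round ((r0:ℝ)*β) := by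
    intro d
    induction d with
    | zero => simp
    | succ d ih =>
      intro hle
      have h1 : r0 + d ≤ r1 := by omega
      have := hstep (r0 + d) (by omega) (by omega)
      rw [show r0 + (d+1) = (r0 + d) + 1 from rfl, this, ih h1]
  -- contradiction via total variation
  have hm := hconst (r1 - r0) (by omega)
  rw [show r0 + (r1 - r0) = r1 by omega] at hm
  set m := round ((r0:ℝ)*β) with hmdef
  have e1 := h' r1 (by omega) le_rfl
  have e0 := h' r0 le_rfl hr01
  rw [hm] at e1
  have htot : ((r1:ℝ) - r0) * β < 1/6 := by
    have a1 := abs_lt.mp e1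
    have a0 := abs_lt.mp e0
    nlinarith
  have hcast1 : ((r1:ℕ):ℝ) = (q:ℝ) - 1 := by
    rw [hr1]; push_cast [Nat.cast_sub (by omega : 1 ≤ q)]; ring
  have hcast0 : ((r0:ℕ):ℝ) ≤ (q:ℝ)/3 + 1 := by
    rw [hr0]
    push_cast
    have : ((q/3 : ℕ) : ℝ) ≤ (q:ℝ)/3 := by
      rw [le_div_iff₀ (by norm_num : (0:ℝ) < 3)]
      exact_mod_cast Nat.div_mul_le_self q 3
    linarith
  have hlow : (2*(q:ℝ)/3 - 2) * β ≤ ((r1:ℝ) - r0) * β := by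
    apply mul_le_mul_of_nonneg_right _ hβ0.le
    rw [hcast1]; linarith
  have hqβ : 11/12 ≤ (q:ℝ) * β := by
    rw [div_le_iff₀ hQ0] at hβl; linarith
  nlinarith [hβ0.le]




-- assumed from aux1:

def digitF (a c : ℕ → ℕ) (n : ℕ) : ℝ := (c (n+1) : ℝ) / (a (n+1) : ℝ)
def tailR (a c : ℕ → ℕ) (k : ℕ) : ℝ := ∑' n, digitF a c (n + k)
def sSeq (a c : ℕ → ℕ) (k : ℕ) : ℝ := (a k : ℝ) * tailR a c k

lemma apos (ha : IsArithSeq a) (n : ℕ) : (0:ℝ) < a n := by exact_mod_cast a_pos ha n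

lemma cast_ratio (ha : IsArithSeq a) (k : ℕ) : ((a (k+1) : ℝ)) = (ratioSeq a (k+1) : ℝ) * a k := by
  have := ratio_mul ha (k+1) (by omega)
  simp only [Nat.add_sub_cancel] at this
  exact_mod_cast this

lemma digitF_nonneg (n : ℕ) : 0 ≤ digitF a c n := by
  unfold digitF; positivity

lemma digitF_le (ha : IsArithSeq a) (hd : ∀ n, 1 ≤ n → c n ≤ ratioSeq a n - 1) (n : ℕ) :
    digitF a c n ≤ 1/(a n) - 1/(a (n+1)) := by
  have hq := two_le_ratio ha (n+1) (by omega)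
  have hcb : (c (n+1) : ℝ) ≤ (ratioSeq a (n+1) : ℝ) - 1 := by
    have := hd (n+1) (by omega)
    have : (c (n+1) : ℕ) ≤ ratioSeq a (n+1) - 1 := this
    have h2 : ((c (n+1) : ℕ) : ℝ) ≤ ((ratioSeq a (n+1) - 1 : ℕ) : ℝ) := by exact_mod_cast this
    rw [Nat.cast_sub (by omega)] at h2; exact_mod_cast h2
  have hmul := cast_ratio ha n
  have h0 := apos ha n
  have h1 := apos ha (n+1)
  have hq0 : (0:ℝ) < (ratioSeq a (n+1) : ℝ) := by
    have : (0:ℕ) < ratioSeq a (n+1) := by omega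
    exact_mod_cast this
  have key : (1:ℝ)/(a n) - 1/(a (n+1)) = ((ratioSeq a (n+1) : ℝ) - 1)/(a (n+1)) := by
    rw [hmul]
    field_simp
  rw [key]
  unfold digitF
  gcongr

lemma digitF_le' (ha : IsArithSeq a) (hd : ∀ n, 1 ≤ n → c n ≤ ratioSeq a n - 1) (n : ℕ) :
    digitF a c n ≤ (1/2 : ℝ)^n := by
  have h1 := digitF_le ha hd n
  have h2 : (1:ℝ)/(a n) ≤ (1/2)^n := by
    have han := apos ha n
    have h2n : ((2:ℝ))^n ≤ (a n:ℝ) := by exact_mod_cast two_pow_le ha n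
    rw [one_div_pow, div_le_div_iff₀ han (pow_pos (by norm_num : (0:ℝ) < 2) n)]
    linarith
  have h3 : (0:ℝ) < 1/(a (n+1)) := by have := apos ha (n+1); positivity
  linarith

lemma summable_digitF (ha : IsArithSeq a) (hd : ∀ n, 1 ≤ n → c n ≤ ratioSeq a n - 1) :
    Summable (digitF a c) :=
  Summable.of_nonneg_of_le (fun n => digitF_nonneg n) (digitF_le' ha hd)
    (summable_geometric_of_lt_one (by norm_num) (by norm_num))

lemma summable_shift (ha : IsArithSeq a) (hd : ∀ n, 1 ≤ n → c n ≤ ratioSeq a n - 1) (k : ℕ) :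
    Summable (fun n => digitF a c (n + k)) :=
  (summable_nat_add_iff k).mpr (summable_digitF ha hd)

lemma tail_succ (ha : IsArithSeq a) (hd : ∀ n, 1 ≤ n → c n ≤ ratioSeq a n - 1) (k : ℕ) :
    tailR a c k = digitF a c k + tailR a c (k+1) := by
  unfold tailR
  rw [Summable.tsum_eq_zero_add (summable_shift ha hd k)]
  simp only [zero_add]
  congr 1
  apply tsum_congr
  intro n
  congr 1
  omega

lemma tail_nonneg (k : ℕ) : 0 ≤ tailR a c k :=
  tsum_nonneg (fun n => digitF_nonneg _)

lemma tail_split (ha : IsArithSeq a) (hd : ∀ n, 1 ≤ n → c n ≤ ratioSeq a n - 1) (N k : ℕ) :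
    tailR a c k = (∑ n ∈ Finset.range N, digitF a c (n + k)) + tailR a c (k + N) := by
  induction N with
  | zero => simp
  | succ N ih =>
    rw [ih, Finset.sum_range_succ, tail_succ ha hd (k + N)]
    have h1 : N + k = k + N := by omega
    have h2 : k + (N+1) = (k + N) + 1 := by omega
    rw [h1, h2]; ring

lemma partial_le (ha : IsArithSeq a) (hd : ∀ n, 1 ≤ n → c n ≤ ratioSeq a n - 1) (k N : ℕ) :
    ∑ n ∈ Finset.range N, digitF a c (n + k) ≤ 1/(a k) - 1/(a (k + N)) := by
  induction N with
  | zero => simp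
  | succ N ih =>
    rw [Finset.sum_range_succ]
    have h1 := digitF_le ha hd (k + N)
    rw [show k + N + 1 = k + (N+1) from by omega] at h1
    rw [show N + k = k + N from by omega]
    linarith

lemma tail_le (ha : IsArithSeq a) (hd : ∀ n, 1 ≤ n → c n ≤ ratioSeq a n - 1) (k : ℕ) :
    tailR a c k ≤ 1/(a k) := by
  apply Summable.tsum_le_of_sum_range_le (summable_shift ha hd k)
  intro N
  have := partial_le ha hd k N
  have h2 : (0:ℝ) < 1/(a (k+N)) := by have := apos ha (k+N); positivity
  linarith

lemma tail_lt (ha : IsArithSeq a) (hd : ∀ n, 1 ≤ n → c n ≤ ratioSeq a n - 1)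
    (hinf : {n | 1 ≤ n ∧ c n < ratioSeq a n - 1}.Infinite) (k : ℕ) :
    tailR a c k < 1/(a k) := by
  -- pick m > k in the infinite set
  obtain ⟨m, hmS, hmk⟩ : ∃ m, m ∈ {n | 1 ≤ n ∧ c n < ratioSeq a n - 1} ∧ k + 1 ≤ m := by
    obtain ⟨m, hm⟩ := (hinf.diff (Set.finite_Iic k)).nonempty
    exact ⟨m, hm.1, by have h2 := hm.2; simp only [Set.mem_Iic, not_le] at h2; omega⟩
  obtain ⟨hm1, hm2⟩ := hmS
  set N := m - k with hN
  have hkN : k + N = m := by omega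
  have hN1 : 1 ≤ N := by omega
  have hsplit := tail_split ha hd N k
  rw [hkN] at hsplit
  -- the sum over range N, split last term
  have hNs : N = (N - 1) + 1 := by omega
  have hsum : ∑ n ∈ Finset.range N, digitF a c (n + k)
      = (∑ n ∈ Finset.range (N-1), digitF a c (n + k)) + digitF a c ((N-1) + k) := by
    conv_lhs => rw [hNs]
    rw [Finset.sum_range_succ]
  have hidx : (N - 1) + k = m - 1 := by omega
  have hidx2 : (m - 1) + 1 = m := by omega
  have hq := two_le_ratio ha m hm1
  have hlast : digitF a c (m - 1) ≤ 1/(a (m-1)) - 2 * (1/(a m)) := by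
    have hcb : (c m : ℝ) ≤ (ratioSeq a m : ℝ) - 2 := by
      have : c m ≤ ratioSeq a m - 2 := by omega
      have h2 : ((c m : ℕ) : ℝ) ≤ ((ratioSeq a m - 2 : ℕ) : ℝ) := by exact_mod_cast this
      rwa [Nat.cast_sub (by omega)] at h2
    have hmul : ((a m : ℝ)) = (ratioSeq a m : ℝ) * a (m-1) := by
      have := cast_ratio ha (m-1)
      rwa [hidx2] at this
    have h0 := apos ha (m-1)
    have h1 := apos ha m
    have hq0 : (0:ℝ) < (ratioSeq a m : ℝ) := by
      have : (0:ℕ) < ratioSeq a m := by omega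
      exact_mod_cast this
    have key : (1:ℝ)/(a (m-1)) - 2 * (1/(a m)) = ((ratioSeq a m : ℝ) - 2)/(a m) := by
      rw [hmul]
      field_simp
    rw [key]
    unfold digitF
    rw [hidx2]
    gcongr
  have hfirst := partial_le ha hd k (N-1)
  have hkm : k + (N - 1) = m - 1 := by omega
  rw [hkm] at hfirst
  have htail := tail_le ha hd m
  have hpos : (0:ℝ) < 1/(a m) := by have := apos ha m; positivity
  rw [hsplit, hsum, hidx]
  linarith

lemma s_nonneg (ha : IsArithSeq a) (k : ℕ) : 0 ≤ sSeq a c k :=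
  mul_nonneg (by positivity) (tail_nonneg k)

lemma s_lt_one (ha : IsArithSeq a) (hd : ∀ n, 1 ≤ n → c n ≤ ratioSeq a n - 1)
    (hinf : {n | 1 ≤ n ∧ c n < ratioSeq a n - 1}.Infinite) (k : ℕ) :
    sSeq a c k < 1 := by
  have h := tail_lt ha hd hinf k
  have hp := apos ha k
  have : (a k : ℝ) * tailR a c k < (a k : ℝ) * (1/(a k)) :=
    mul_lt_mul_of_pos_left h hp
  rwa [mul_one_div, div_self (ne_of_gt hp)] at this

lemma s_rec (ha : IsArithSeq a) (hd : ∀ n, 1 ≤ n → c n ≤ ratioSeq a n - 1) (k : ℕ) :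
    (ratioSeq a (k+1) : ℝ) * sSeq a c k = (c (k+1) : ℝ) + sSeq a c (k+1) := by
  have hmul := cast_ratio ha k
  have h1 := apos ha (k+1)
  unfold sSeq
  rw [tail_succ ha hd k]
  have : (ratioSeq a (k+1) : ℝ) * ((a k:ℝ) * (digitF a c k + tailR a c (k+1)))
      = (a (k+1) : ℝ) * digitF a c k + (a (k+1):ℝ) * tailR a c (k+1) := by
    rw [hmul]; ring
  rw [this]
  congr 1
  unfold digitF
  field_simp

lemma smul_eq (ha : IsArithSeq a) (hd : ∀ n, 1 ≤ n → c n ≤ ratioSeq a n - 1)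
    {x : Circle1} (hx : x = ((tailR a c 0 : ℝ) : Circle1)) (r j : ℕ) :
    ((r * a j : ℕ) • x) = ((((r:ℝ) * sSeq a c j : ℝ)) : Circle1) := by
  rw [hx, nsmul_coe]
  apply coe_eq_coe_of_sub_int ((r * ∑ n ∈ Finset.range j, c (n+1) * (a j / a (n+1)) : ℕ) : ℤ)
  have hsplit := tail_split ha hd j 0
  simp only [add_zero, zero_add] at hsplit
  have hterm : ∀ n ∈ Finset.range j, (a j : ℝ) * digitF a c n
      = ((c (n+1) * (a j / a (n+1)) : ℕ) : ℝ) := by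
    intro n hn
    have hle : n + 1 ≤ j := Finset.mem_range.mp hn
    have hdvd : a (n+1) ∣ a j := dvd_of_le ha hle
    have h1 := apos ha (n+1)
    have hcast : ((a j / a (n+1) : ℕ) : ℝ) = (a j : ℝ)/(a (n+1) : ℝ) :=
      Nat.cast_div hdvd (ne_of_gt h1)
    rw [Nat.cast_mul, hcast]
    unfold digitF
    field_simp
  have hsum : (a j : ℝ) * (∑ n ∈ Finset.range j, digitF a c n)
      = ((∑ n ∈ Finset.range j, c (n+1) * (a j / a (n+1)) : ℕ) : ℝ) := by
    rw [Finset.mul_sum, Nat.cast_sum]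
    exact Finset.sum_congr rfl hterm
  have hgoal : (r:ℝ) * (a j : ℝ) * tailR a c 0 - (r:ℝ) * sSeq a c j
      = (r:ℝ) * ((∑ n ∈ Finset.range j, c (n+1) * (a j / a (n+1)) : ℕ) : ℝ) := by
    rw [← hsum]
    unfold sSeq
    rw [hsplit]
    push_cast
    ring
  rw [Int.cast_natCast]
  push_cast at hgoal ⊢
  linear_combination hgoal






variable {a c : ℕ → ℕ}

lemma finite_supp_main (a e c : ℕ → ℕ) (x : Circle1) (ha : IsArithSeq a)
    (he : StrictMono e) (hrange : Set.range e = ESet a)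
    (hx : Tendsto (fun n => (e n) • x) atTop (nhds 0))
    (hc : IsCanonicalRep a c x) : (suppOf c).Finite := by
  obtain ⟨hd, hinf, hxeq⟩ := hc
  have hx0 : x = ((tailR a c 0 : ℝ) : Circle1) := by
    rw [hxeq]
    congr 1
  rw [NormedAddCommGroup.tendsto_nhds_zero] at hx
  obtain ⟨N₀, hN₀⟩ := eventually_atTop.mp (hx (1/12) (by norm_num))
  have hE : ∀ m, m ∈ ESet a → e N₀ ≤ m → ‖(m • x : Circle1)‖ < 1/12 := by
    intro m hm hle
    have hm' : m ∈ Set.range e := by rw [hrange]; exact hm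
    obtain ⟨n, rfl⟩ := hm'
    exact hN₀ n (he.le_iff_le.mp hle)
  set K := max (e N₀) 1 with hK
  have hK1 : 1 ≤ K := le_max_right _ _
  have haK : ∀ j, K ≤ j → e N₀ ≤ a j := fun j hj =>
    le_trans (le_trans (le_max_left _ _) hj) ha.2.1.le_apply
  have hnorm : ∀ r j : ℕ, ‖((r * a j : ℕ) • x : Circle1)‖
      = |(r:ℝ) * sSeq a c j - round ((r:ℝ)*sSeq a c j)| := by
    intro r j; rw [smul_eq ha hd hx0 r j, norm_coe]
  have hdich : ∀ j, K ≤ j → sSeq a c j < 1/12 ∨ 11/12 < sSeq a c j := by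
    intro j hj
    have h2 := hE (a j) (a_mem_eset ha j) (haK j hj)
    have h4 : ‖((a j : ℕ) • x : Circle1)‖ = |sSeq a c j - round (sSeq a c j)| := by
      have := hnorm 1 j
      simpa using this
    rw [h4] at h2
    exact dichotomy (s_nonneg ha j) (s_lt_one ha hd hinf j) h2
  have hrnorm : ∀ j, K ≤ j → ∀ r, ratioSeq a (j+1)/3 + 1 ≤ r → r ≤ ratioSeq a (j+1) - 1 →
      |(r:ℝ) * sSeq a c j - round ((r:ℝ)*sSeq a c j)| < 1/12 := by
    intro j hj r h1 h2
    have hm : r * a j ∈ ESet a := ⟨j+1, by omega, r, Or.inr ⟨h1, h2⟩, by simp⟩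
    have hle : e N₀ ≤ r * a j :=
      le_trans (haK j hj) (Nat.le_mul_of_pos_left _ (by omega))
    have := hE _ hm hle
    rwa [hnorm r j] at this
  have L1 : ∀ j, K ≤ j → c (j+1) ≠ 0 → 11/12 < sSeq a c j := by
    intro j hj hc0
    rcases hdich j hj with hlt | hgt
    · exfalso
      have hq2 := two_le_ratio ha (j+1) (by omega)
      have hrec := s_rec ha hd j
      have hs'0 := s_nonneg (c := c) ha (j+1)
      have hc1 : (1:ℝ) ≤ (c (j+1) : ℝ) := by
        exact_mod_cast Nat.one_le_iff_ne_zero.mpr hc0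
      have hQ : (2:ℝ) ≤ (ratioSeq a (j+1) : ℝ) := by exact_mod_cast hq2
      have hq0 : (0:ℝ) < (ratioSeq a (j+1) : ℝ) := by linarith
      have hslow : (1:ℝ)/(ratioSeq a (j+1) : ℝ) ≤ sSeq a c j := by
        rw [div_le_iff₀ hq0]
        nlinarith
      rcases le_or_gt (ratioSeq a (j+1)) 12 with hsmall | hbig
      · have h12 : (1:ℝ)/12 ≤ 1/(ratioSeq a (j+1) : ℝ) := by
          apply one_div_le_one_div_of_le hq0
          exact_mod_cast hsmall
        linarith
      · refine walk_lemma (q := ratioSeq a (j+1)) (by omega) (β := sSeq a c j) ?_ hlt ?_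
        · have hh : (11/12 : ℝ)/(ratioSeq a (j+1):ℝ) ≤ 1/(ratioSeq a (j+1):ℝ) := by
            gcongr
            norm_num
          linarith
        · intro r h1 h2
          exact ⟨round ((r:ℝ) * sSeq a c j), hrnorm j hj r h1 h2⟩
    · exact hgt
  have L2 : ∀ j, K ≤ j → 11/12 < sSeq a c j →
      c (j+1) = ratioSeq a (j+1) - 1 ∧ 11/12 < sSeq a c (j+1) := by
    intro j hj hs
    have hq2 := two_le_ratio ha (j+1) (by omega)
    have hQ : (2:ℝ) ≤ (ratioSeq a (j+1):ℝ) := by exact_mod_cast hq2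
    have hq0 : (0:ℝ) < (ratioSeq a (j+1):ℝ) := by linarith
    have hrec := s_rec ha hd j
    have hs1' := s_lt_one ha hd hinf (j+1)
    have hs0' := s_nonneg (c := c) ha (j+1)
    have hs1 := s_lt_one ha hd hinf j
    have hcub : (c (j+1) : ℝ) ≤ (ratioSeq a (j+1):ℝ) - 1 := by
      have h := hd (j+1) (by omega)
      have h2 : ((c (j+1) : ℕ) : ℝ) ≤ ((ratioSeq a (j+1) - 1 : ℕ) : ℝ) := by exact_mod_cast h
      rw [Nat.cast_sub (by omega)] at h2
      exact_mod_cast h2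
    have hwalkh : ∀ r : ℕ, ratioSeq a (j+1)/3 + 1 ≤ r → r ≤ ratioSeq a (j+1) - 1 →
        ∃ m : ℤ, |(r:ℝ)*(1 - sSeq a c j) - m| < 1/12 := by
      intro r h1 h2
      refine ⟨(r:ℤ) - round ((r:ℝ) * sSeq a c j), ?_⟩
      have h3 := hrnorm j hj r h1 h2
      have h4 : (r:ℝ)*(1 - sSeq a c j) - ((r:ℤ) - round ((r:ℝ)*sSeq a c j) : ℤ)
          = -((r:ℝ)*sSeq a c j - round ((r:ℝ)*sSeq a c j)) := by
        push_cast
        ring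
      rw [h4, abs_neg]
      exact h3
    have hstep1 : 11/12 < sSeq a c (j+1) := by
      rcases hdich (j+1) (by omega) with hlt' | hgt'
      · exfalso
        have hq12 : (12:ℕ) ≤ ratioSeq a (j+1) := by
          by_contra hle
          push_neg at hle
          have h11 : (ratioSeq a (j+1):ℝ) ≤ 11 := by
            exact_mod_cast (by omega : ratioSeq a (j+1) ≤ 11)
          nlinarith
        refine walk_lemma hq12 (β := 1 - sSeq a c j) ?_ (by linarith) hwalkh
        rw [div_le_iff₀ hq0]
        nlinarith
      · exact hgt'
    refine ⟨?_, hstep1⟩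
    by_contra hne
    have hcle : c (j+1) ≤ ratioSeq a (j+1) - 2 := by
      have := hd (j+1) (by omega)
      omega
    have hcub2 : (c (j+1):ℝ) ≤ (ratioSeq a (j+1):ℝ) - 2 := by
      have h2 : ((c (j+1) : ℕ) : ℝ) ≤ ((ratioSeq a (j+1) - 2 : ℕ) : ℝ) := by exact_mod_cast hcle
      rw [Nat.cast_sub (by omega)] at h2
      exact_mod_cast h2
    have hq13 : (12:ℕ) ≤ ratioSeq a (j+1) := by
      by_contra hle
      push_neg at hle
      have h11 : (ratioSeq a (j+1):ℝ) ≤ 11 := by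
        exact_mod_cast (by omega : ratioSeq a (j+1) ≤ 11)
      nlinarith
    refine walk_lemma hq13 (β := 1 - sSeq a c j) ?_ (by linarith) hwalkh
    rw [div_le_iff₀ hq0]
    nlinarith
  have hprop : ∀ j, K ≤ j → c (j+1) ≠ 0 → ∀ d : ℕ, c (j+d+1) = ratioSeq a (j+d+1) - 1 := by
    intro j hj hc0
    have hsd : ∀ d : ℕ, 11/12 < sSeq a c (j+d) := by
      intro d
      induction d with
      | zero => simpa using L1 j hj hc0
      | succ d ih =>
        have := (L2 (j+d) (by omega) ih).2
        rwa [show j+(d+1) = (j+d)+1 from rfl]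
    intro d
    exact (L2 (j+d) (by omega) (hsd d)).1
  have hzero : ∀ j, K ≤ j → c (j+1) = 0 := by
    by_contra hcon
    push_neg at hcon
    obtain ⟨j, hj, hc0⟩ := hcon
    refine hinf (Set.Finite.subset (Set.finite_Iic (j+1)) ?_)
    intro n hn
    simp only [Set.mem_setOf_eq] at hn
    by_contra hgt
    simp only [Set.mem_Iic, not_le] at hgt
    have hmax := hprop j hj hc0 (n - j - 1)
    rw [show j + (n - j - 1) + 1 = n from by omega] at hmax
    omega
  apply Set.Finite.subset (Set.finite_Iic K)
  intro n hn
  obtain ⟨hn1, hn2⟩ := hn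
  by_contra hgt
  simp only [Set.mem_Iic, not_le] at hgt
  have := hzero (n-1) (by omega)
  rw [show (n-1)+1 = n from by omega] at this
  omega






lemma one_div_a_le (ha : IsArithSeq a) (n : ℕ) : (1:ℝ)/(a n) ≤ (1/2)^n := by
  have han := apos ha n
  have h2n : ((2:ℝ))^n ≤ (a n:ℝ) := by exact_mod_cast two_pow_le ha n
  rw [one_div_pow, div_le_div_iff₀ han (pow_pos (by norm_num : (0:ℝ) < 2) n)]
  linarith

lemma rational_of_finite (ha : IsArithSeq a) {c : ℕ → ℕ} {x : Circle1}
    (hc : IsCanonicalRep a c x) (hfin : (suppOf c).Finite) :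
    ∃ N j : ℕ, x = (((j:ℝ)/(a N) : ℝ) : Circle1) := by
  obtain ⟨hd, hinf, hxeq⟩ := hc
  obtain ⟨N, hN⟩ := hfin.bddAbove
  have hzero : ∀ n, N < n → c n = 0 := by
    intro n hn
    by_contra h0
    have : n ∈ suppOf c := ⟨by omega, h0⟩
    exact absurd (hN this) (by omega)
  refine ⟨N, ∑ n ∈ Finset.range N, c (n+1) * (a N / a (n+1)), ?_⟩
  rw [hxeq]
  congr 1
  have hvanish : ∀ n ∉ Finset.range N, (c (n+1) : ℝ)/(a (n+1) : ℝ) = 0 := by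
    intro n hn
    rw [Finset.mem_range, not_lt] at hn
    rw [hzero (n+1) (by omega)]
    simp
  rw [tsum_eq_sum hvanish]
  have hterm : ∀ n ∈ Finset.range N, (c (n+1) : ℝ)/(a (n+1) : ℝ)
      = ((c (n+1) * (a N / a (n+1)) : ℕ) : ℝ)/(a N) := by
    intro n hn
    have hle : n + 1 ≤ N := Finset.mem_range.mp hn
    have hdvd : a (n+1) ∣ a N := dvd_of_le ha hle
    have h1 := apos ha (n+1)
    have hN' := apos ha N
    rw [Nat.cast_mul, Nat.cast_div hdvd (ne_of_gt h1)]
    field_simp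
  rw [Finset.sum_congr rfl hterm, ← Finset.sum_div, ← Nat.cast_sum]

lemma exists_canonical (ha : IsArithSeq a) (x : Circle1) :
    ∃ c : ℕ → ℕ, IsCanonicalRep a c x := by
  obtain ⟨t, rfl⟩ := QuotientAddGroup.mk_surjective x
  set y := Int.fract t with hy
  have hxy : ((t : ℝ) : Circle1) = ((y : ℝ) : Circle1) :=
    coe_eq_coe_of_sub_int ⌊t⌋ (Int.self_sub_fract t)
  have hy0 : 0 ≤ y := Int.fract_nonneg t
  have hy1 : y < 1 := Int.fract_lt_one t
  set b : ℕ → ℤ := fun n => ⌊y * a n⌋ with hbdef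
  set c : ℕ → ℕ := fun n => if n = 0 then 0 else (b n - ratioSeq a n * b (n-1)).toNat
    with hcdef
  have hb0 : b 0 = 0 := by
    simp only [hbdef, ha.1, Nat.cast_one, mul_one]
    rw [Int.floor_eq_zero_iff]
    exact ⟨hy0, hy1⟩
  have hbnn : ∀ n, 0 ≤ b n := fun n =>
    Int.floor_nonneg.mpr (mul_nonneg hy0 (le_of_lt (apos ha n)))
  have hkey : ∀ n, 1 ≤ n → (ratioSeq a n : ℤ) * b (n-1) ≤ b n ∧
      b n ≤ ratioSeq a n * b (n-1) + (ratioSeq a n - 1) := by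
    intro n hn
    have hmul : ((a n : ℝ)) = (ratioSeq a n : ℝ) * a (n-1) := by
      have := cast_ratio ha (n-1)
      rwa [show n - 1 + 1 = n from by omega] at this
    have hq2 := two_le_ratio ha n hn
    have hqR : (0:ℝ) < (ratioSeq a n : ℝ) := by
      have : (2:ℝ) ≤ (ratioSeq a n : ℝ) := by exact_mod_cast hq2
      linarith
    have hz : y * a n = (ratioSeq a n : ℝ) * (y * a (n-1)) := by rw [hmul]; ring
    constructor
    · rw [Int.le_floor]
      push_cast
      rw [hz]
      exact mul_le_mul_of_nonneg_left (Int.floor_le _) (le_of_lt hqR)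
    · have : b n < ratioSeq a n * b (n-1) + ratioSeq a n := by
        rw [Int.floor_lt]
        push_cast
        rw [hz]
        have h1 : y * a (n-1) < (b (n-1) : ℝ) + 1 := Int.lt_floor_add_one _
        nlinarith
      omega
  have hc_eq : ∀ n, 1 ≤ n → (c n : ℤ) = b n - ratioSeq a n * b (n-1) := by
    intro n hn
    simp only [hcdef, if_neg (by omega : ¬ n = 0)]
    rw [Int.toNat_of_nonneg]
    have := (hkey n hn).1
    omega
  have hdig : ∀ n, 1 ≤ n → c n ≤ ratioSeq a n - 1 := by
    intro n hn
    have h1 := hc_eq n hn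
    have h2 := (hkey n hn).2
    have h3 := two_le_ratio ha n hn
    omega
  have hpartial : ∀ N, ∑ n ∈ Finset.range N, (c (n+1) : ℝ)/(a (n+1) : ℝ)
      = (b N : ℝ)/(a N) := by
    intro N
    induction N with
    | zero => simp [hb0, ha.1]
    | succ N ih =>
      rw [Finset.sum_range_succ, ih]
      have hmul := cast_ratio ha N
      have hcR : (c (N+1) : ℝ) = (b (N+1) : ℝ) - (ratioSeq a (N+1) : ℝ) * (b N : ℝ) := by
        have h0 := hc_eq (N+1) (by omega)
        have h2 := congrArg (fun z : ℤ => (z : ℝ)) h0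
        push_cast at h2
        linarith
      have hq2 := two_le_ratio ha (N+1) (by omega)
      have hqR : (0:ℝ) < (ratioSeq a (N+1) : ℝ) := by
        have : (2:ℝ) ≤ (ratioSeq a (N+1) : ℝ) := by exact_mod_cast hq2
        linarith
      have haN := apos ha N
      have haN1 := apos ha (N+1)
      rw [hcR, hmul]
      field_simp
      ring
  have htend : Tendsto (fun N => (b N:ℝ)/(a N)) atTop (𝓝 y) := by
    have hub : ∀ N, (b N:ℝ)/(a N) ≤ y := by
      intro N
      rw [div_le_iff₀ (apos ha N)]
      exact Int.floor_le _
    have hlb : ∀ N, y - (1/2:ℝ)^N ≤ (b N:ℝ)/(a N) := by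
      intro N
      have h1 : y * a N < (b N : ℝ) + 1 := Int.lt_floor_add_one _
      have h2 := one_div_a_le ha N
      have h3 := apos ha N
      have h5 : y ≤ ((b N:ℝ) + 1)/(a N) := by
        rw [le_div_iff₀ h3]; linarith
      have h6 : ((b N:ℝ)+1)/(a N) = (b N:ℝ)/(a N) + 1/(a N) := by ring
      linarith
    apply tendsto_of_tendsto_of_tendsto_of_le_of_le _ _ hlb hub
    · have hgeo : Tendsto (fun N => (1/2:ℝ)^N) atTop (𝓝 0) := by
        apply tendsto_pow_atTop_nhds_zero_of_lt_one <;> norm_num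
      have := tendsto_const_nhds (x := y) (f := atTop (α := ℕ)) |>.sub hgeo
      simpa using this
    · exact tendsto_const_nhds
  have hsum : ∑' n, (c (n+1) : ℝ)/(a (n+1) : ℝ) = y := by
    have hs := summable_digitF ha hdig
    have h1 : Tendsto (fun N => ∑ n ∈ Finset.range N, digitF a c n) atTop
        (𝓝 (∑' n, digitF a c n)) := hs.hasSum.tendsto_sum_nat
    have h2 : (fun N => ∑ n ∈ Finset.range N, digitF a c n)
        = fun N => (b N:ℝ)/(a N) := by
      funext N
      exact hpartial N
    rw [h2] at h1
    exact tendsto_nhds_unique h1 htend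
  have hninf : {n | 1 ≤ n ∧ c n < ratioSeq a n - 1}.Infinite := by
    by_contra hfin
    rw [Set.not_infinite] at hfin
    obtain ⟨N0, hN0⟩ := hfin.bddAbove
    set N := N0 + 1 with hNdef
    have hmax : ∀ n, N ≤ n → c n = ratioSeq a n - 1 := by
      intro n hn
      have h1 : n ∉ {n | 1 ≤ n ∧ c n < ratioSeq a n - 1} := by
        intro hmem
        exact absurd (hN0 hmem) (by omega)
      simp only [Set.mem_setOf_eq, not_and, not_lt] at h1
      have h2 := h1 (by omega)
      have h3 := hdig n (by omega)
      omega
    have hbrec : ∀ n, N ≤ n → b n + 1 = ratioSeq a n * (b (n-1) + 1) := by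
      intro n hn
      have h1 := hc_eq n (by omega)
      have h2 := hmax n hn
      have h3 := two_le_ratio ha n (by omega)
      have h4 : (c n : ℤ) = (ratioSeq a n : ℤ) - 1 := by
        rw [h2]
        push_cast [Nat.cast_sub (by omega : 1 ≤ ratioSeq a n)]
        ring
      rw [h4] at h1
      ring_nf
      ring_nf at h1
      omega
    have hconst : ∀ d : ℕ, ((b (N+d) : ℝ) + 1)/(a (N+d)) = ((b N:ℝ)+1)/(a N) := by
      intro d
      induction d with
      | zero => simp
      | succ d ih =>
        have hn : N ≤ N + d + 1 := by omega
        have h1 := hbrec (N+d+1) hn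
        have hmul := cast_ratio ha (N+d)
        have hq2 := two_le_ratio ha (N+d+1) (by omega)
        have hqR : (0:ℝ) < (ratioSeq a (N+d+1) : ℝ) := by
          have : (2:ℝ) ≤ (ratioSeq a (N+d+1) : ℝ) := by exact_mod_cast hq2
          linarith
        have h2 : ((b (N+d+1) : ℝ) + 1) = (ratioSeq a (N+d+1) : ℝ) * ((b (N+d) : ℝ) + 1) := by
          have h2' := congrArg (fun z : ℤ => (z : ℝ)) h1
          push_cast at h2'
          linarith
        rw [show N + (d+1) = N + d + 1 from rfl, h2, hmul]
        rw [← ih]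
        have h3 := apos ha (N+d)
        field_simp
    -- limit gives y = (b N + 1)/(a N)
    have hmono : Tendsto (fun d : ℕ => N + d) atTop atTop := by
      apply tendsto_atTop_atTop.mpr
      intro m
      exact ⟨m, fun d hd => by omega⟩
    have hlim1 : Tendsto (fun d => (b (N+d):ℝ)/(a (N+d))) atTop (𝓝 y) :=
      htend.comp hmono
    have hlim2 : Tendsto (fun d => (b (N+d):ℝ)/(a (N+d))) atTop
        (𝓝 (((b N:ℝ)+1)/(a N))) := by
      have heq : ∀ d, (b (N+d):ℝ)/(a (N+d)) = ((b N:ℝ)+1)/(a N) - 1/(a (N+d)) := by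
        intro d
        have h3 := apos ha (N+d)
        have := hconst d
        field_simp at this ⊢
        linarith
      simp only [heq]
      have h1 : Tendsto (fun d => (1:ℝ)/(a (N+d))) atTop (𝓝 0) := by
        apply squeeze_zero (fun d => by positivity)
          (fun d => ?_) (g := fun d => (1/2:ℝ)^d)
        · apply tendsto_pow_atTop_nhds_zero_of_lt_one <;> norm_num
        · calc (1:ℝ)/(a (N+d)) ≤ 1/(a d) := by
                have h4 := apos ha d
                have h5 : (a d : ℝ) ≤ a (N+d) := by
                  exact_mod_cast ha.2.1.monotone (by omega : d ≤ N + d)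
                gcongr
          _ ≤ (1/2)^d := one_div_a_le ha d
      have := tendsto_const_nhds (x := ((b N:ℝ)+1)/(a N)) (f := atTop (α := ℕ)) |>.sub h1
      simpa using this
    have hyeq : y = ((b N:ℝ)+1)/(a N) := tendsto_nhds_unique hlim1 hlim2
    have hfloor : y * a N = (b N : ℝ) + 1 := by
      rw [hyeq, div_mul_cancel₀]
      exact ne_of_gt (apos ha N)
    have : b N = b N + 1 := by
      have h5 : b N = ⌊y * (a N : ℝ)⌋ := rfl
      rw [hfloor] at h5
      rw [show ((b N : ℝ) + 1) = ((b N + 1 : ℤ) : ℝ) from by push_cast; ring] at h5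
      rw [Int.floor_intCast] at h5
      exact h5
    omega
  refine ⟨c, hdig, hninf, ?_⟩
  rw [hxy]
  congr 1
  exact hsum.symm


end ESeqAux

/-- the increasing enumeration `(e_n)` of `ESet a` is an arithmetic-type
sequence with unbounded ratio, every element of `t_{(e_n)}(𝕋)` has finite support, and
`t_{(e_n)}(𝕋)` is countable. -/
theorem eseq_unbounded_ratio_countable (a e : ℕ → ℕ) (ha : IsArithSeq a)
    (hq : ∀ C : ℕ, ∃ n, 1 ≤ n ∧ C < ratioSeq a n)
    (he : StrictMono e) (hrange : Set.range e = ESet a) :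
    IsArithTypeSeq a e ∧
      (∀ C : ℕ, ∃ n, C * e n < e (n + 1)) ∧
      (∀ x ∈ charSub e, ∀ c : ℕ → ℕ, IsCanonicalRep a c x → (suppOf c).Finite) ∧
      (charSub e).Countable := by
  have harith : IsArithTypeSeq a e := by
    refine ⟨he, fun k hk => ?_, ?_⟩
    · rw [hrange]; exact ESeqAux.a_mem_eset ha k
    · rw [hrange]; exact ESeqAux.eset_subset_dset ha
  have hpart2 : ∀ C : ℕ, ∃ n, C * e n < e (n + 1) := by
    intro C
    obtain ⟨k, hk1, hkC⟩ := hq (3*C + 2)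
    have hmem : a (k-1) ∈ ESet a := ⟨k, hk1, 1, Or.inl rfl, (one_mul _).symm⟩
    have hmem' : a (k-1) ∈ Set.range e := by rw [hrange]; exact hmem
    obtain ⟨n, hn⟩ := hmem'
    refine ⟨n, ?_⟩
    have hnext : e (n+1) ∈ ESet a := by rw [← hrange]; exact Set.mem_range_self _
    have hgt : a (k-1) < e (n+1) := by rw [← hn]; exact he (by omega)
    have hgap := ESeqAux.eset_gap ha hk1 hnext hgt
    have hC : C < ratioSeq a k / 3 + 1 := by omega
    have hp := ESeqAux.a_pos ha (k-1)
    calc C * e n = C * a (k-1) := by rw [hn]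
    _ < (ratioSeq a k / 3 + 1) * a (k-1) := by
        exact Nat.mul_lt_mul_of_lt_of_le hC (le_refl _) hp
    _ ≤ e (n+1) := hgap
  have hpart3 : ∀ x ∈ charSub e, ∀ c : ℕ → ℕ, IsCanonicalRep a c x → (suppOf c).Finite :=
    fun x hx c hc => ESeqAux.finite_supp_main a e c x ha he hrange hx hc
  have hpart4 : (charSub e).Countable := by
    have hsub : charSub e ⊆ ⋃ (N : ℕ), ⋃ (j : ℕ), {(((j:ℝ)/(a N) : ℝ) : Circle1)} := by
      intro x hx
      obtain ⟨c, hc⟩ := ESeqAux.exists_canonical ha x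
      obtain ⟨N, j, hNj⟩ := ESeqAux.rational_of_finite ha hc (hpart3 x hx c hc)
      simp only [Set.mem_iUnion, Set.mem_singleton_iff]
      exact ⟨N, j, hNj⟩
    exact Set.Countable.mono hsub
      (Set.countable_iUnion fun N => Set.countable_iUnion fun j => Set.countable_singleton _)
  exact ⟨harith, hpart2, hpart3, hpart4⟩
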